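/- β-dual characterization (sufficiency direction): let a = (a_k) be a real sequence such that Σ_k |a_k/k − a_{k+1}/(k+1)| < ∞ and a_n/n → 0 as n → ∞. Then for every x ∈ c₀(Ω) (i.e., with y_n = Σ_{k=1}^n k·x_k → 0), the series Σ_k a_k x_k converges. -/

import Mathlib

open Filter Finset Topology

/-- The Ω-transform: `(Ωx)ₙ = ∑_{k=1}^n k·xₖ`. -/
noncomputable def OmegaT (x : ℕ → ℝ) (n : ℕ) : ℝ := ∑ k ∈ Finset.Icc 1 n, (k : ℝ) * x k

lemma omegaT_zero (x : ℕ → ℝ) : OmegaT x 0 = 0 := by simp [OmegaT]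

lemma omegaT_succ (x : ℕ → ℝ) (n : ℕ) :
    OmegaT x (n + 1) = OmegaT x n + ((n : ℝ) + 1) * x (n + 1) := by
  unfold OmegaT
  rw [Finset.sum_Icc_succ_top (by omega : 1 ≤ n + 1)]
  push_cast
  ring

lemma abel_identity (a x : ℕ → ℝ) (n : ℕ) :
    ∑ k ∈ Finset.Icc 1 n, a k * x k =
      (∑ k ∈ Finset.range n, (a k / k - a (k + 1) / (k + 1)) * OmegaT x k)
        + a n / n * OmegaT x n := by
  induction n with
  | zero => simp [omegaT_zero]
  | succ n ih =>
      rw [Finset.sum_Icc_succ_top (by omega : 1 ≤ n + 1), ih,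
        Finset.sum_range_succ, omegaT_succ]
      have hn : ((n : ℝ) + 1) ≠ 0 := by positivity
      push_cast
      field_simp
      ring

/-- β-dual of `c₀(Ω)`, sufficiency: if `∑ₖ |aₖ/k − aₖ₊₁/(k+1)| < ∞` and `aₙ/n → 0`,
then `∑ₖ aₖxₖ` converges for every `x ∈ c₀(Ω)`. -/
theorem beta_dual_sufficiency (a : ℕ → ℝ)
    (hsum : Summable fun k => |a k / k - a (k + 1) / (k + 1)|)
    (hlim : Tendsto (fun n => a n / n) atTop (𝓝 0))
    (x : ℕ → ℝ) (hx : Tendsto (OmegaT x) atTop (𝓝 0)) :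
    ∃ L : ℝ, Tendsto (fun n => ∑ k ∈ Finset.Icc 1 n, a k * x k) atTop (𝓝 L) := by
  set y := OmegaT x with hy
  -- y is bounded
  obtain ⟨C, hC⟩ : ∃ C, ∀ n, |y n| ≤ C := by
    have hb : BddAbove (Set.range fun n => |y n|) := (hx.abs).bddAbove_range
    obtain ⟨C, hC⟩ := hb
    exact ⟨C, fun n => hC ⟨n, rfl⟩⟩
  set b := fun k => a k / k - a (k + 1) / (k + 1) with hb
  have hg : Summable fun k => b k * y k := by
    apply Summable.of_norm_bounded (hsum.mul_right C)
    intro k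
    rw [Real.norm_eq_abs, abs_mul]
    exact mul_le_mul_of_nonneg_left (hC k) (abs_nonneg _)
  have h1 : Tendsto (fun n => ∑ k ∈ Finset.range n, b k * y k) atTop (𝓝 (∑' k, b k * y k)) :=
    hg.hasSum.tendsto_sum_nat
  have h2 : Tendsto (fun n => a n / n * y n) atTop (𝓝 0) := by
    simpa using hlim.mul hx
  refine ⟨∑' k, b k * y k, ?_⟩
  have := h1.add h2
  rw [add_zero] at this
  exact this.congr (fun n => (abel_identity a x n).symm)
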